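/- Let λ, μ ∈ (0,∞), T > 0, d ∈ ℕ with d ≥ 1, and let u ∈ [0,1] be a constant. Define ψ : [0,1] → ℝ by ψ(x) = I_{1,T}(u, x^{1/d}) and let ψ̂ be its convex minorant on [0,1]. Then for every graphon f, ∫_{[0,1]²} I_{1,T}(u, f(x,y)) dx dy ≥ ψ̂( ∫_{[0,1]²} f(x,y)^d dx dy ). -/

import Mathlib

noncomputable section

open MeasureTheory Real Filter

/-- Probability that an initially inactive edge is active at time `t`. -/
def p01 (lam mu t : ℝ) : ℝ := (lam - lam * Real.exp (-(t * (lam + mu)))) / (lam + mu)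

/-- Probability that an initially active edge is active at time `t`. -/
def p11 (lam mu t : ℝ) : ℝ := (lam + mu * Real.exp (-(t * (lam + mu)))) / (lam + mu)

/-- The cumulant-type function `J_{t,v}(u)`. -/
def Jfun (lam mu t v u : ℝ) : ℝ :=
  u * Real.log (1 - p11 lam mu t + Real.exp v * p11 lam mu t) +
  (1 - u) * Real.log (1 - p01 lam mu t + Real.exp v * p01 lam mu t)

/-- The one-step rate function `I_{1,t}(u,x) = sup_v [v x - J_{t,v}(u)]`. -/
def I1 (lam mu t u x : ℝ) : ℝ := ⨆ v : ℝ, (v * x - Jfun lam mu t v u)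

/-- A graphon: a measurable symmetric function with values in `[0,1]`. -/
def IsGraphon (f : ℝ → ℝ → ℝ) : Prop :=
  Measurable (Function.uncurry f) ∧ (∀ x y, f x y ∈ Set.Icc (0:ℝ) 1) ∧ ∀ x y, f x y = f y x

/-- The unit square `[0,1]²`. -/
def unitSq : Set (ℝ × ℝ) := Set.Icc (0:ℝ) 1 ×ˢ Set.Icc (0:ℝ) 1

/-- `φ` is the convex minorant of `ψ` on `[0,1]`: the largest convex function on `[0,1]`
bounded above by `ψ`. -/
def IsConvexMinorant (ψ φ : ℝ → ℝ) : Prop :=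
  ConvexOn ℝ (Set.Icc (0:ℝ) 1) φ ∧ (∀ x ∈ Set.Icc (0:ℝ) 1, φ x ≤ ψ x) ∧
  ∀ φ' : ℝ → ℝ, ConvexOn ℝ (Set.Icc (0:ℝ) 1) φ' → (∀ x ∈ Set.Icc (0:ℝ) 1, φ' x ≤ ψ x) →
    ∀ x ∈ Set.Icc (0:ℝ) 1, φ' x ≤ φ x

/-- uniform upper bound for the terms inside the sup defining `I1`. -/
def Cb (lam mu T u : ℝ) : ℝ :=
  max (-(u * Real.log (1 - p11 lam mu T) + (1-u) * Real.log (1 - p01 lam mu T)))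
      (-(u * Real.log (p11 lam mu T) + (1-u) * Real.log (p01 lam mu T)))

lemma p01_mem {lam mu T : ℝ} (hlam : 0 < lam) (hmu : 0 < mu) (hT : 0 < T) :
    p01 lam mu T ∈ Set.Ioo (0:ℝ) 1 := by
  have hs : 0 < lam + mu := by linarith
  have hE : Real.exp (-(T*(lam+mu))) < 1 := by
    rw [Real.exp_lt_one_iff]; nlinarith
  have hE0 : 0 < Real.exp (-(T*(lam+mu))) := Real.exp_pos _
  constructor
  · apply div_pos; nlinarith; exact hs
  · rw [p01, div_lt_one hs]; nlinarith

lemma p11_mem {lam mu T : ℝ} (hlam : 0 < lam) (hmu : 0 < mu) (hT : 0 < T) :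
    p11 lam mu T ∈ Set.Ioo (0:ℝ) 1 := by
  have hs : 0 < lam + mu := by linarith
  have hE : Real.exp (-(T*(lam+mu))) < 1 := by
    rw [Real.exp_lt_one_iff]; nlinarith
  have hE0 : 0 < Real.exp (-(T*(lam+mu))) := Real.exp_pos _
  constructor
  · apply div_pos; nlinarith; exact hs
  · rw [p11, div_lt_one hs]; nlinarith

lemma term_le {lam mu T u : ℝ} (hlam : 0 < lam) (hmu : 0 < mu) (hT : 0 < T)
    (hu : u ∈ Set.Icc (0:ℝ) 1) {x : ℝ} (hx : x ∈ Set.Icc (0:ℝ) 1) (v : ℝ) :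
    v * x - Jfun lam mu T v u ≤ Cb lam mu T u := by
  obtain ⟨hp0a, hp0b⟩ := p01_mem hlam hmu hT
  obtain ⟨hp1a, hp1b⟩ := p11_mem hlam hmu hT
  obtain ⟨hu0, hu1⟩ := hu
  obtain ⟨hx0, hx1⟩ := hx
  have hev : 0 < Real.exp v := Real.exp_pos v
  rcases le_or_gt v 0 with hv | hv
  · -- use the left component of max
    have h1 : Real.log (1 - p11 lam mu T) ≤
        Real.log (1 - p11 lam mu T + Real.exp v * p11 lam mu T) :=
      Real.log_le_log (by linarith) (by nlinarith)
    have h0 : Real.log (1 - p01 lam mu T) ≤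
        Real.log (1 - p01 lam mu T + Real.exp v * p01 lam mu T) :=
      Real.log_le_log (by linarith) (by nlinarith)
    have hJ : u * Real.log (1 - p11 lam mu T) + (1-u) * Real.log (1 - p01 lam mu T)
        ≤ Jfun lam mu T v u :=
      add_le_add (mul_le_mul_of_nonneg_left h1 hu0) (mul_le_mul_of_nonneg_left h0 (by linarith))
    have hvx : v * x ≤ 0 := mul_nonpos_of_nonpos_of_nonneg hv hx0
    refine le_trans ?_ (le_max_left _ _)
    linarith
  · -- use the right component of max
    have key : ∀ p : ℝ, 0 < p → p < 1 →
        v + Real.log p ≤ Real.log (1 - p + Real.exp v * p) := by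
      intro p hp hp1
      have hlog : Real.log (Real.exp v * p) = v + Real.log p := by
        rw [Real.log_mul (Real.exp_ne_zero v) (ne_of_gt hp), Real.log_exp]
      rw [← hlog]
      exact Real.log_le_log (by positivity) (by nlinarith)
    have h1 := key _ hp1a hp1b
    have h0 := key _ hp0a hp0b
    have hJ : u * (v + Real.log (p11 lam mu T)) + (1-u) * (v + Real.log (p01 lam mu T))
        ≤ Jfun lam mu T v u :=
      add_le_add (mul_le_mul_of_nonneg_left h1 hu0) (mul_le_mul_of_nonneg_left h0 (by linarith))
    have hexp : u * (v + Real.log (p11 lam mu T)) + (1-u) * (v + Real.log (p01 lam mu T))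
        = v + (u * Real.log (p11 lam mu T) + (1-u) * Real.log (p01 lam mu T)) := by ring
    have hvx : v * (x - 1) ≤ 0 := mul_nonpos_of_nonneg_of_nonpos hv.le (by linarith)
    refine le_trans ?_ (le_max_right _ _)
    nlinarith

lemma bddAbove_term {lam mu T u : ℝ} (hlam : 0 < lam) (hmu : 0 < mu) (hT : 0 < T)
    (hu : u ∈ Set.Icc (0:ℝ) 1) {x : ℝ} (hx : x ∈ Set.Icc (0:ℝ) 1) :
    BddAbove (Set.range fun v : ℝ => v * x - Jfun lam mu T v u) := by
  refine ⟨Cb lam mu T u, ?_⟩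
  rintro y ⟨v, rfl⟩
  exact term_le hlam hmu hT hu hx v

lemma I1_nonneg {lam mu T u : ℝ} (hlam : 0 < lam) (hmu : 0 < mu) (hT : 0 < T)
    (hu : u ∈ Set.Icc (0:ℝ) 1) {x : ℝ} (hx : x ∈ Set.Icc (0:ℝ) 1) :
    0 ≤ I1 lam mu T u x := by
  have h0 : (0:ℝ) * x - Jfun lam mu T 0 u = 0 := by
    have e1 : (1:ℝ) - p11 lam mu T + Real.exp 0 * p11 lam mu T = 1 := by
      rw [Real.exp_zero]; ring
    have e0 : (1:ℝ) - p01 lam mu T + Real.exp 0 * p01 lam mu T = 1 := by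
      rw [Real.exp_zero]; ring
    simp [Jfun, e1, e0]
  calc (0:ℝ) = (0:ℝ) * x - Jfun lam mu T 0 u := h0.symm
    _ ≤ I1 lam mu T u x := le_ciSup (bddAbove_term hlam hmu hT hu hx) 0

lemma I1_le {lam mu T u : ℝ} (hlam : 0 < lam) (hmu : 0 < mu) (hT : 0 < T)
    (hu : u ∈ Set.Icc (0:ℝ) 1) {x : ℝ} (hx : x ∈ Set.Icc (0:ℝ) 1) :
    I1 lam mu T u x ≤ Cb lam mu T u :=
  ciSup_le fun v => term_le hlam hmu hT hu hx v

lemma I1_eq_rat_sup {lam mu T u : ℝ} (hlam : 0 < lam) (hmu : 0 < mu) (hT : 0 < T)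
    (hu : u ∈ Set.Icc (0:ℝ) 1) {x : ℝ} (hx : x ∈ Set.Icc (0:ℝ) 1) :
    I1 lam mu T u x = ⨆ q : ℚ, ((q:ℝ) * x - Jfun lam mu T q u) := by
  have hbddR := bddAbove_term hlam hmu hT hu hx
  have hbddQ : BddAbove (Set.range fun q : ℚ => (q:ℝ) * x - Jfun lam mu T q u) := by
    refine ⟨Cb lam mu T u, ?_⟩
    rintro y ⟨q, rfl⟩
    exact term_le hlam hmu hT hu hx q
  obtain ⟨hp0a, hp0b⟩ := p01_mem hlam hmu hT
  obtain ⟨hp1a, hp1b⟩ := p11_mem hlam hmu hT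
  have hφ : Continuous fun w : ℝ => w * x - Jfun lam mu T w u := by
    have hc1 : Continuous fun w : ℝ =>
        Real.log (1 - p11 lam mu T + Real.exp w * p11 lam mu T) := by
      apply Continuous.log
      · fun_prop
      · intro w
        have := Real.exp_pos w
        nlinarith
    have hc0 : Continuous fun w : ℝ =>
        Real.log (1 - p01 lam mu T + Real.exp w * p01 lam mu T) := by
      apply Continuous.log
      · fun_prop
      · intro w
        have := Real.exp_pos w
        nlinarith
    unfold Jfun
    exact (continuous_id.mul continuous_const).sub
      ((continuous_const.mul hc1).add (continuous_const.mul hc0))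
  apply le_antisymm
  · apply ciSup_le
    intro v
    apply le_of_forall_pos_le_add
    intro ε hε
    obtain ⟨δ, hδ, hball⟩ := Metric.continuousAt_iff.mp hφ.continuousAt ε hε
    obtain ⟨q, hq1, hq2⟩ := exists_rat_btwn (show v - δ < v by linarith)
    have hd : dist (q:ℝ) v < δ := by
      rw [Real.dist_eq, abs_lt]; constructor <;> linarith
    have hnear := hball hd
    rw [Real.dist_eq, abs_lt] at hnear
    have hqle : (q:ℝ) * x - Jfun lam mu T q u
        ≤ ⨆ q : ℚ, ((q:ℝ) * x - Jfun lam mu T q u) := le_ciSup hbddQ q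
    have h1 := hnear.1
    linarith
  · exact ciSup_le fun q => le_ciSup hbddR (q:ℝ)

/-- Jensen-type lower bound via the convex minorant of `x ↦ I_{1,T}(u, x^{1/d})`. -/
theorem stmt_14 (lam mu T : ℝ) (hlam : 0 < lam) (hmu : 0 < mu) (hT : 0 < T)
    (d : ℕ) (hd : 1 ≤ d) (u : ℝ) (hu : u ∈ Set.Icc (0:ℝ) 1)
    (psihat : ℝ → ℝ)
    (hmin : IsConvexMinorant (fun x => I1 lam mu T u (x ^ (1 / (d:ℝ)))) psihat)
    (f : ℝ → ℝ → ℝ) (hf : IsGraphon f) :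
    psihat (∫ p in unitSq, (f p.1 p.2) ^ d) ≤ ∫ p in unitSq, I1 lam mu T u (f p.1 p.2) := by
  obtain ⟨hconv, hle, -⟩ := hmin
  obtain ⟨hFmeas, hfmem, -⟩ := hf
  have hUmeas : MeasurableSet unitSq := measurableSet_Icc.prod measurableSet_Icc
  have hvol : volume unitSq = 1 := by
    rw [unitSq, Measure.volume_eq_prod, Measure.prod_prod, Real.volume_Icc]
    norm_num
  haveI : IsProbabilityMeasure (volume.restrict unitSq) :=
    ⟨by rw [Measure.restrict_apply_univ]; exact hvol⟩
  set μ0 := volume.restrict unitSq with hμ0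
  set g : ℝ × ℝ → ℝ := fun p => (f p.1 p.2) ^ d with hgdef
  have hg_meas : Measurable g := hFmeas.pow_const d
  have hg01 : ∀ p, g p ∈ Set.Icc (0:ℝ) 1 := by
    intro p
    obtain ⟨h0, h1⟩ := hfmem p.1 p.2
    exact ⟨pow_nonneg h0 d, pow_le_one₀ h0 h1⟩
  have hg_int : Integrable g μ0 := by
    refine Integrable.mono' (integrable_const 1) hg_meas.aestronglyMeasurable ?_
    filter_upwards with p
    rw [Real.norm_eq_abs, abs_le]
    exact ⟨by linarith [(hg01 p).1], (hg01 p).2⟩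
  set a := ∫ p in unitSq, (f p.1 p.2) ^ d with hadef
  have haint : a = ∫ p, g p ∂μ0 := rfl
  have ha0 : 0 ≤ a := setIntegral_nonneg hUmeas fun p _ => (hg01 p).1
  have ha1 : a ≤ 1 := by
    have h := integral_mono hg_int (integrable_const 1) fun p => (hg01 p).2
    simpa [integral_const] using h
  have haIcc : a ∈ Set.Icc (0:ℝ) 1 := ⟨ha0, ha1⟩
  -- pointwise identity
  have hdne : (d:ℝ) ≠ 0 := Nat.cast_ne_zero.mpr (by omega)
  have hpoint : ∀ p : ℝ × ℝ, I1 lam mu T u (f p.1 p.2)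
      = I1 lam mu T u ((g p) ^ (1 / (d:ℝ))) := by
    intro p
    have hc := (hfmem p.1 p.2).1
    have : (g p) ^ (1 / (d:ℝ)) = f p.1 p.2 := by
      show ((f p.1 p.2) ^ d : ℝ) ^ (1 / (d:ℝ)) = f p.1 p.2
      rw [← Real.rpow_natCast (f p.1 p.2) d, ← Real.rpow_mul hc, mul_one_div,
        div_self hdne, Real.rpow_one]
    rw [this]
  set h : ℝ × ℝ → ℝ := fun p => I1 lam mu T u (f p.1 p.2) with hhdef
  have hψg_le : ∀ p, psihat (g p) ≤ h p := by
    intro p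
    have h2 := hle (g p) (hg01 p)
    show psihat (g p) ≤ I1 lam mu T u (f p.1 p.2)
    rw [hpoint p]
    exact h2
  show psihat a ≤ ∫ p, h p ∂μ0
  rcases eq_or_lt_of_le ha0 with hA0 | hA0
  · -- a = 0 : g = 0 a.e.
    have hg0 : g =ᵐ[μ0] 0 := by
      refine (integral_eq_zero_iff_of_nonneg (fun p => (hg01 p).1) hg_int).mp ?_
      rw [← haint, ← hA0]
    have hhae : h =ᵐ[μ0] fun _ => I1 lam mu T u ((0:ℝ) ^ (1 / (d:ℝ))) := by
      filter_upwards [hg0] with p hp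
      have hp' : g p = 0 := hp
      show I1 lam mu T u (f p.1 p.2) = _
      rw [hpoint p, hp']
    rw [integral_congr_ae hhae, integral_const, probReal_univ]
    simp only [ENNReal.toReal_one, one_smul]
    rw [← hA0]
    exact hle 0 ⟨le_refl 0, zero_le_one⟩
  rcases eq_or_lt_of_le ha1 with hA1 | hA1
  · -- a = 1 : g = 1 a.e.
    have hone_int : Integrable (fun p => 1 - g p) μ0 := (integrable_const 1).sub hg_int
    have hone : (fun p => 1 - g p) =ᵐ[μ0] 0 := by
      refine (integral_eq_zero_iff_of_nonneg (fun p => sub_nonneg.mpr (hg01 p).2)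
        hone_int).mp ?_
      rw [integral_sub (integrable_const 1) hg_int, ← haint, hA1, integral_const, probReal_univ]
      simp
    have hhae : h =ᵐ[μ0] fun _ => I1 lam mu T u ((1:ℝ) ^ (1 / (d:ℝ))) := by
      filter_upwards [hone] with p hp
      have hp2 : (1:ℝ) - g p = 0 := hp
      have hp' : g p = 1 := by linarith
      show I1 lam mu T u (f p.1 p.2) = _
      rw [hpoint p, hp']
    rw [integral_congr_ae hhae, integral_const, probReal_univ]
    simp only [ENNReal.toReal_one, one_smul]
    rw [hA1]
    exact hle 1 ⟨zero_le_one, le_refl 1⟩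
  · -- 0 < a < 1 : supporting line
    set S := (fun x => (psihat a - psihat x) / (a - x)) '' Set.Ico 0 a with hSdef
    have hSne : S.Nonempty := ⟨_, ⟨0, ⟨le_refl 0, hA0⟩, rfl⟩⟩
    have hSbdd : BddAbove S := by
      refine ⟨(psihat 1 - psihat a) / (1 - a), ?_⟩
      rintro y ⟨x, hx, rfl⟩
      exact hconv.slope_mono_adjacent ⟨hx.1, (hx.2.trans hA1).le⟩
        ⟨zero_le_one, le_refl 1⟩ hx.2 hA1
    set c := sSup S with hcdef
    have hsupport : ∀ x ∈ Set.Icc (0:ℝ) 1, psihat a + c * (x - a) ≤ psihat x := by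
      intro x hx
      rcases lt_trichotomy x a with hlt | heq | hgt
      · have hxa : (psihat a - psihat x) / (a - x) ≤ c :=
          le_csSup hSbdd ⟨x, ⟨hx.1, hlt⟩, rfl⟩
        have h2 : psihat a - psihat x ≤ c * (a - x) :=
          (div_le_iff₀ (by linarith)).mp hxa
        nlinarith
      · rw [heq]; simp
      · have hxa : c ≤ (psihat x - psihat a) / (x - a) := by
          apply csSup_le hSne
          rintro y ⟨z, hz, rfl⟩
          exact hconv.slope_mono_adjacent ⟨hz.1, (hz.2.trans hA1).le⟩ hx hz.2 hgt
        have h2 : c * (x - a) ≤ psihat x - psihat a :=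
          (le_div_iff₀ (by linarith)).mp hxa
        linarith
    -- integrability of h
    have hhmeas : Measurable h := by
      have heq : h = fun p => ⨆ q : ℚ, ((q:ℝ) * (f p.1 p.2) - Jfun lam mu T q u) :=
        funext fun p => I1_eq_rat_sup hlam hmu hT hu (hfmem p.1 p.2)
      rw [heq]
      exact Measurable.iSup fun q : ℚ =>
        (hFmeas.const_mul ((q:ℝ))).sub measurable_const
    have hh_nonneg : ∀ p, 0 ≤ h p := fun p => I1_nonneg hlam hmu hT hu (hfmem p.1 p.2)
    have hh_le : ∀ p, h p ≤ Cb lam mu T u := fun p => I1_le hlam hmu hT hu (hfmem p.1 p.2)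
    have hh_int : Integrable h μ0 := by
      refine Integrable.mono' (integrable_const |Cb lam mu T u|) hhmeas.aestronglyMeasurable ?_
      filter_upwards with p
      rw [Real.norm_eq_abs, abs_le]
      constructor
      · have := abs_nonneg (Cb lam mu T u); linarith [hh_nonneg p]
      · exact (hh_le p).trans (le_abs_self _)
    have hlin_int : Integrable (fun p => psihat a + c * (g p - a)) μ0 :=
      (integrable_const _).add ((hg_int.sub (integrable_const a)).const_mul c)
    have hmono : ∫ p, (psihat a + c * (g p - a)) ∂μ0 ≤ ∫ p, h p ∂μ0 := by
      refine integral_mono hlin_int hh_int fun p => ?_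
      exact (hsupport (g p) (hg01 p)).trans (hψg_le p)
    have hcomp : ∫ p, (psihat a + c * (g p - a)) ∂μ0 = psihat a := by
      have h1 : Integrable (fun p : ℝ × ℝ => c * (g p - a)) μ0 :=
        (hg_int.sub (integrable_const a)).const_mul c
      rw [integral_add (integrable_const _) h1, integral_const_mul,
        integral_sub hg_int (integrable_const a), ← haint,
        integral_const, integral_const, probReal_univ]
      simp
    linarith
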